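/- Let N ≥ 1, 1 ≤ n ≤ N, and z ∈ ℂ with z^N ≠ 1. Then (1/N) · ∑_{α ∈ A_N} α^n / (1 - α z)^2 = z^{N-n} · ( N / (1 - z^N)^2 − (n−1) / (1 - z^N) ). -/

import Mathlib

open Finset

private lemma sum_nthRoots_reindex (N : ℕ) (hN : N ≠ 0) (f : ℂ → ℂ) :
    ∑ α ∈ (Polynomial.nthRoots N (1 : ℂ)).toFinset, f α
      = ∑ i ∈ range N, f (Complex.exp (2 * Real.pi * Complex.I / N) ^ i) := by
  have hζ := Complex.isPrimitiveRoot_exp N hN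
  have hnd : (Polynomial.nthRoots N (1 : ℂ)).Nodup := hζ.nthRoots_nodup (a := 1) one_ne_zero
  have : ∑ α ∈ (Polynomial.nthRoots N (1 : ℂ)).toFinset, f α
      = ((Polynomial.nthRoots N (1 : ℂ)).map f).sum := by
    rw [Finset.sum, Multiset.toFinset_val, hnd.dedup]
  rw [this, hζ.nthRoots_eq (one_pow N), Multiset.map_map]
  simp [Finset.sum_range, Finset.sum, Function.comp]

private lemma sum_pow_nthRoots (N t : ℕ) (hN : N ≠ 0) :
    ∑ α ∈ (Polynomial.nthRoots N (1 : ℂ)).toFinset, α ^ t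
      = if N ∣ t then (N : ℂ) else 0 := by
  have hζ := Complex.isPrimitiveRoot_exp N hN
  rw [sum_nthRoots_reindex N hN (· ^ t)]
  have e : ∀ i : ℕ, (Complex.exp (2 * Real.pi * Complex.I / N) ^ i) ^ t
      = (Complex.exp (2 * Real.pi * Complex.I / N) ^ t) ^ i := fun i => by
    rw [← pow_mul, mul_comm i t, pow_mul]
  simp only [e]
  by_cases h : N ∣ t
  · rw [if_pos h]
    have h1 : Complex.exp (2 * Real.pi * Complex.I / N) ^ t = 1 :=
      hζ.pow_eq_one_iff_dvd t |>.mpr h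
    simp [h1]
  · rw [if_neg h]
    have h1 : Complex.exp (2 * Real.pi * Complex.I / N) ^ t ≠ 1 :=
      fun hx => h ((hζ.pow_eq_one_iff_dvd t).mp hx)
    rw [geom_sum_eq h1, ← pow_mul, mul_comm t N, pow_mul, hζ.pow_eq_one, one_pow,
      sub_self, zero_div]

private lemma base_pf (N m : ℕ) (hN : 1 ≤ N) (hm1 : 1 ≤ m) (hmN : m ≤ N)
    (z : ℂ) (hz : z ^ N ≠ 1) :
    ∑ α ∈ (Polynomial.nthRoots N (1 : ℂ)).toFinset, α ^ m * (1 - α * z)⁻¹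
      = (N : ℂ) * (z ^ (N - m) * (1 - z ^ N)⁻¹) := by
  have h1 : (1 : ℂ) - z ^ N ≠ 0 := sub_ne_zero_of_ne (Ne.symm hz)
  have key : ∀ α ∈ (Polynomial.nthRoots N (1 : ℂ)).toFinset,
      α ^ m * (1 - α * z)⁻¹ = (∑ j ∈ range N, α ^ (m + j) * z ^ j) * (1 - z ^ N)⁻¹ := by
    intro α hα
    have hαN : α ^ N = 1 :=
      (Polynomial.mem_nthRoots (by omega)).mp (Multiset.mem_toFinset.mp hα)
    have hne : (1 : ℂ) - α * z ≠ 0 := by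
      intro h
      apply hz
      have h2 : α * z = 1 := by linear_combination -h
      calc z ^ N = α ^ N * z ^ N := by rw [hαN, one_mul]
        _ = (α * z) ^ N := (mul_pow α z N).symm
        _ = 1 := by rw [h2, one_pow]
    have geo : (1 - α * z) * ∑ j ∈ range N, (α * z) ^ j = 1 - z ^ N := by
      have h3 := geom_sum_mul (α * z) N
      have h2 : (α * z) ^ N = z ^ N := by rw [mul_pow, hαN, one_mul]
      linear_combination -h3 - h2
    have hinv : (1 - α * z)⁻¹ = (∑ j ∈ range N, (α * z) ^ j) * (1 - z ^ N)⁻¹ := by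
      field_simp
      linear_combination -geo
    rw [hinv, ← mul_assoc, Finset.mul_sum]
    congr 1
    apply Finset.sum_congr rfl
    intro j _
    rw [mul_pow, pow_add]
    ring
  rw [Finset.sum_congr rfl key, ← Finset.sum_mul, Finset.sum_comm]
  have inner : ∀ j ∈ range N,
      ∑ α ∈ (Polynomial.nthRoots N (1 : ℂ)).toFinset, α ^ (m + j) * z ^ j
        = (if N ∣ m + j then (N : ℂ) else 0) * z ^ j := by
    intro j _
    rw [← Finset.sum_mul, sum_pow_nthRoots N (m + j) (by omega)]
  rw [Finset.sum_congr rfl inner]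
  have hsingle : ∑ j ∈ range N, (if N ∣ m + j then (N : ℂ) else 0) * z ^ j
      = (N : ℂ) * z ^ (N - m) := by
    rw [Finset.sum_eq_single (N - m)]
    · rw [if_pos ⟨1, by omega⟩]
    · intro j hj hjne
      rw [mem_range] at hj
      have : ¬ N ∣ m + j := by
        rintro ⟨c, hc⟩
        have h2 := Nat.mul_le_mul_left N (show 2 ≤ c by
          by_contra hcon
          interval_cases c <;> omega)
        omega
      rw [if_neg this, zero_mul]
    · intro h
      exact absurd (mem_range.mpr (by omega)) h
  rw [hsingle]
  ring

private lemma deriv_pf (N m : ℕ) (hN : 1 ≤ N) (hm1 : 1 ≤ m) (hmN : m ≤ N)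
    (z : ℂ) (hz : z ^ N ≠ 1) :
    ∑ α ∈ (Polynomial.nthRoots N (1 : ℂ)).toFinset, α ^ m * (α / (1 - α * z) ^ 2)
      = (N : ℂ) * (((N - m : ℕ) : ℂ) * z ^ (N - m - 1) * (1 - z ^ N)⁻¹
          + z ^ (N - m) * ((N : ℂ) * z ^ (N - 1) / (1 - z ^ N) ^ 2)) := by
  have h1 : (1 : ℂ) - z ^ N ≠ 0 := sub_ne_zero_of_ne (Ne.symm hz)
  have hU : IsOpen {w : ℂ | w ^ N ≠ 1} :=
    IsOpen.preimage (continuous_pow N) isOpen_compl_singleton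
  have hne : ∀ α ∈ (Polynomial.nthRoots N (1 : ℂ)).toFinset, (1 : ℂ) - α * z ≠ 0 := by
    intro α hα h
    have hαN : α ^ N = 1 :=
      (Polynomial.mem_nthRoots (by omega)).mp (Multiset.mem_toFinset.mp hα)
    apply hz
    have h2 : α * z = 1 := by linear_combination -h
    calc z ^ N = α ^ N * z ^ N := by rw [hαN, one_mul]
      _ = (α * z) ^ N := (mul_pow α z N).symm
      _ = 1 := by rw [h2, one_pow]
  have hf : HasDerivAt
      (fun w => ∑ α ∈ (Polynomial.nthRoots N (1 : ℂ)).toFinset, α ^ m * (1 - α * w)⁻¹)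
      (∑ α ∈ (Polynomial.nthRoots N (1 : ℂ)).toFinset,
        α ^ m * (-(-α) / (1 - α * z) ^ 2)) z := by
    apply HasDerivAt.fun_sum
    intro α hα
    have hlin : HasDerivAt (fun w : ℂ => 1 - α * w) (-α) z := by
      simpa using ((hasDerivAt_id z).const_mul α).const_sub 1
    exact (hlin.inv (hne α hα)).const_mul _
  have hg : HasDerivAt (fun w : ℂ => (N : ℂ) * (w ^ (N - m) * (1 - w ^ N)⁻¹))
      ((N : ℂ) * ((((N - m : ℕ) : ℂ) * z ^ (N - m - 1)) * (1 - z ^ N)⁻¹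
        + z ^ (N - m) * (-(-((N : ℕ) * z ^ (N - 1))) / (1 - z ^ N) ^ 2))) z := by
    have hp : HasDerivAt (fun w : ℂ => w ^ (N - m)) (((N - m : ℕ) : ℂ) * z ^ (N - m - 1)) z :=
      hasDerivAt_pow (N - m) z
    have hq : HasDerivAt (fun w : ℂ => 1 - w ^ N) (-((N : ℕ) * z ^ (N - 1))) z := by
      simpa using (hasDerivAt_pow N z).const_sub 1
    exact ((hp.mul (hq.inv h1))).const_mul _
  have hev : (fun w => ∑ α ∈ (Polynomial.nthRoots N (1 : ℂ)).toFinset, α ^ m * (1 - α * w)⁻¹)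
      =ᶠ[nhds z] (fun w => (N : ℂ) * (w ^ (N - m) * (1 - w ^ N)⁻¹)) := by
    filter_upwards [hU.mem_nhds hz] with w hw
    exact base_pf N m hN hm1 hmN w hw
  have heq := (hg.congr_of_eventuallyEq hev).unique hf
  calc ∑ α ∈ (Polynomial.nthRoots N (1 : ℂ)).toFinset, α ^ m * (α / (1 - α * z) ^ 2)
      = ∑ α ∈ (Polynomial.nthRoots N (1 : ℂ)).toFinset,
          α ^ m * (-(-α) / (1 - α * z) ^ 2) := by
        apply Finset.sum_congr rfl; intro α _; ring_nf
    _ = (N : ℂ) * ((((N - m : ℕ) : ℂ) * z ^ (N - m - 1)) * (1 - z ^ N)⁻¹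
        + z ^ (N - m) * (-(-((N : ℕ) * z ^ (N - 1))) / (1 - z ^ N) ^ 2)) := heq.symm
    _ = _ := by ring

/-- `(1/N) ∑_{α^N = 1} α^n / (1 - α z)^2
      = z^{N-n} (N/(1-z^N)^2 - (n-1)/(1-z^N))`. -/
theorem rootsOfUnity_partial_fraction_sum_sq
    (N n : ℕ) (hN : 1 ≤ N) (hn1 : 1 ≤ n) (hnN : n ≤ N)
    (z : ℂ) (hz : z ^ N ≠ 1) :
    (1 / (N : ℂ)) *
        ∑ α ∈ (Polynomial.nthRoots N (1 : ℂ)).toFinset, α ^ n / (1 - α * z) ^ 2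
      = z ^ (N - n) *
          ((N : ℂ) / (1 - z ^ N) ^ 2 - ((n : ℂ) - 1) / (1 - z ^ N)) := by
  have hN0 : (N : ℂ) ≠ 0 := Nat.cast_ne_zero.mpr (by omega)
  have h1 : (1 : ℂ) - z ^ N ≠ 0 := sub_ne_zero_of_ne (Ne.symm hz)
  have hzz : z ^ (N - 1) * z = z ^ N := by
    rw [← pow_succ]; congr 1; omega
  by_cases hn : n = 1
  · subst hn
    have hsum : ∑ α ∈ (Polynomial.nthRoots N (1 : ℂ)).toFinset, α ^ 1 / (1 - α * z) ^ 2
        = ∑ α ∈ (Polynomial.nthRoots N (1 : ℂ)).toFinset, α ^ N * (α / (1 - α * z) ^ 2) := by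
      apply Finset.sum_congr rfl
      intro α hα
      have hαN : α ^ N = 1 :=
        (Polynomial.mem_nthRoots (by omega)).mp (Multiset.mem_toFinset.mp hα)
      rw [hαN, one_mul, pow_one]
    rw [hsum, deriv_pf N N hN hN le_rfl z hz, Nat.sub_self]
    simp only [pow_zero, Nat.cast_zero, zero_mul, one_mul, zero_add]
    field_simp
    ring
  · have hn2 : 2 ≤ n := by omega
    have hsum : ∑ α ∈ (Polynomial.nthRoots N (1 : ℂ)).toFinset, α ^ n / (1 - α * z) ^ 2
        = ∑ α ∈ (Polynomial.nthRoots N (1 : ℂ)).toFinset,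
            α ^ (n - 1) * (α / (1 - α * z) ^ 2) := by
      apply Finset.sum_congr rfl
      intro α _
      rw [mul_div_assoc', ← pow_succ]
      congr 2
      omega
    rw [hsum, deriv_pf N (n - 1) hN (by omega) (by omega) z hz]
    have e1 : N - (n - 1) = (N - n) + 1 := by omega
    have e2 : N - (n - 1) - 1 = N - n := by omega
    rw [e2, e1, pow_succ]
    rw [Nat.cast_add, Nat.cast_sub hnN, Nat.cast_one]
    have h3 : z ^ (N - n) * z * ((N : ℂ) * z ^ (N - 1) / (1 - z ^ N) ^ 2)
        = z ^ (N - n) * ((N : ℂ) * z ^ N / (1 - z ^ N) ^ 2) := by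
      rw [← hzz]; ring
    rw [h3]
    field_simp
    ring
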